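/- For every real x > 0, the series ∑_{i=1}^∞ i·∏_{j=1}^i x/(x+j+1) converges and its sum equals x − e^x·x^{−x−1}·∫_0^x e^{−t}·t^{x+1} dt. -/

import Mathlib

open Real intervalIntegral Finset Filter

noncomputable def cprod (x : ℝ) (n : ℕ) : ℝ := ∏ j ∈ Finset.Icc 1 n, x / (x + (j : ℝ) + 1)

noncomputable def Jint (x : ℝ) (k : ℕ) : ℝ := ∫ t in (0:ℝ)..x, Real.exp (-t) * t ^ (x + 1 + (k:ℝ))

lemma cprod_zero (x : ℝ) : cprod x 0 = 1 := by simp [cprod]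

lemma cprod_succ (x : ℝ) (n : ℕ) :
    cprod x (n+1) = cprod x n * (x / (x + (n:ℝ) + 2)) := by
  rw [cprod, cprod, Finset.prod_Icc_succ_top (Nat.le_add_left 1 n)]
  push_cast
  congr 2
  ring

lemma cprod_nonneg {x : ℝ} (hx : 0 < x) (n : ℕ) : 0 ≤ cprod x n := by
  refine Finset.prod_nonneg fun j hj => ?_
  have hj1 : (1:ℕ) ≤ j := (Finset.mem_Icc.mp hj).1
  positivity

lemma cprod_le_geom {x : ℝ} (hx : 0 < x) (n : ℕ) :
    cprod x n ≤ (x / (x + 2)) ^ n := by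
  have h := Finset.prod_le_prod (s := Finset.Icc 1 n)
    (f := fun j : ℕ => x / (x + (j:ℝ) + 1)) (g := fun _ => x / (x + 2))
    (fun j hj => by positivity)
    (fun j hj => by
      have hj1 : (1:ℕ) ≤ j := (Finset.mem_Icc.mp hj).1
      have : (1:ℝ) ≤ (j:ℝ) := by exact_mod_cast hj1
      apply div_le_div_of_nonneg_left hx.le (by linarith)
      linarith)
  simpa [cprod, Nat.card_Icc, div_pow] using h

lemma continuousOn_integrand (x s : ℝ) (hs : 0 ≤ s) :
    ContinuousOn (fun t : ℝ => Real.exp (-t) * t ^ s) (Set.uIcc 0 x) := by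
  refine ContinuousOn.mul (Continuous.continuousOn (by continuity)) ?_
  intro t _
  exact (Real.continuousAt_rpow_const t s (Or.inr hs)).continuousWithinAt

lemma intervalIntegrable_integrand (x s : ℝ) (hs : 0 ≤ s) :
    IntervalIntegrable (fun t : ℝ => Real.exp (-t) * t ^ s) MeasureTheory.volume 0 x :=
  (continuousOn_integrand x s hs).intervalIntegrable

/-- Integration by parts recurrence for the incomplete Gamma integral. -/
lemma gamma_rec (x s : ℝ) (hx : 0 < x) (hs : 1 ≤ s) :
    (∫ t in (0:ℝ)..x, Real.exp (-t) * t ^ s)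
      = s * (∫ t in (0:ℝ)..x, Real.exp (-t) * t ^ (s-1)) - Real.exp (-x) * x ^ s := by
  have hderiv : ∀ t ∈ Set.uIcc (0:ℝ) x,
      HasDerivAt (fun t : ℝ => -(Real.exp (-t) * t ^ s))
        (Real.exp (-t) * t ^ s - s * (Real.exp (-t) * t ^ (s-1))) t := by
    intro t _
    have h1 : HasDerivAt (fun t : ℝ => Real.exp (-t)) (-Real.exp (-t)) t := by
      simpa using (hasDerivAt_neg t).exp
    have h2 : HasDerivAt (fun t : ℝ => t ^ s) (s * t ^ (s-1)) t :=
      Real.hasDerivAt_rpow_const (Or.inr hs)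
    have : HasDerivAt (fun t : ℝ => -(Real.exp (-t) * t ^ s))
        (-(-Real.exp (-t) * t ^ s + Real.exp (-t) * (s * t ^ (s - 1)))) t := (h1.mul h2).neg
    convert this using 1
    ring
  have hint : IntervalIntegrable
      (fun t => Real.exp (-t) * t ^ s - s * (Real.exp (-t) * t ^ (s-1)))
      MeasureTheory.volume 0 x :=
    (intervalIntegrable_integrand x s (by linarith)).sub
      ((intervalIntegrable_integrand x (s-1) (by linarith)).const_mul s)
  have key := intervalIntegral.integral_eq_sub_of_hasDerivAt hderiv hint
  rw [intervalIntegral.integral_sub (intervalIntegrable_integrand x s (by linarith))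
      ((intervalIntegrable_integrand x (s-1) (by linarith)).const_mul s),
    intervalIntegral.integral_const_mul] at key
  have h0 : (0:ℝ) ^ s = 0 := Real.zero_rpow (by linarith)
  rw [h0] at key
  simp at key
  linarith

lemma Jint_rec (x : ℝ) (hx : 0 < x) (k : ℕ) :
    Jint x (k+1) = (x + 2 + (k:ℝ)) * Jint x k - Real.exp (-x) * x ^ (x + 2 + (k:ℝ)) := by
  have hk : (0:ℝ) ≤ (k:ℝ) := Nat.cast_nonneg k
  have h := gamma_rec x (x + 2 + (k:ℝ)) hx (by linarith)
  have e1 : x + 2 + (k:ℝ) - 1 = x + 1 + (k:ℝ) := by ring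
  have e2 : x + 1 + ((k:ℕ)+1 : ℕ) = x + 2 + (k:ℝ) := by push_cast; ring
  rw [e1] at h
  rw [Jint, Jint, e2, h]

lemma Jint_nonneg {x : ℝ} (hx : 0 < x) (k : ℕ) : 0 ≤ Jint x k := by
  apply intervalIntegral.integral_nonneg hx.le
  intro t ht
  have := Real.rpow_nonneg ht.1 (x + 1 + (k:ℝ))
  positivity

lemma Jint_le {x : ℝ} (hx : 0 < x) (k : ℕ) : Jint x k ≤ x ^ (x + 2 + (k:ℝ)) := by
  have hmono : Jint x k ≤ ∫ _ in (0:ℝ)..x, x ^ (x + 1 + (k:ℝ)) := by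
    apply intervalIntegral.integral_mono_on hx.le
      (by simpa [Set.uIcc_of_le hx.le] using intervalIntegrable_integrand x (x+1+(k:ℝ)) (by positivity))
      intervalIntegrable_const
    intro t ht
    have h1 : Real.exp (-t) ≤ 1 := Real.exp_le_one_iff.mpr (by linarith [ht.1])
    have h2 : t ^ (x + 1 + (k:ℝ)) ≤ x ^ (x + 1 + (k:ℝ)) :=
      Real.rpow_le_rpow ht.1 ht.2 (by positivity)
    calc Real.exp (-t) * t ^ (x + 1 + (k:ℝ)) ≤ 1 * (x ^ (x + 1 + (k:ℝ))) := by
          apply mul_le_mul h1 h2 (Real.rpow_nonneg ht.1 _) zero_le_one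
      _ = x ^ (x + 1 + (k:ℝ)) := one_mul _
  have : ∫ _ in (0:ℝ)..x, x ^ (x + 1 + (k:ℝ)) = x * x ^ (x + 1 + (k:ℝ)) := by
    simp
  rw [this] at hmono
  calc Jint x k ≤ x * x ^ (x + 1 + (k:ℝ)) := hmono
    _ = x ^ (x + 2 + (k:ℝ)) := by
        rw [show x + 2 + (k:ℝ) = 1 + (x + 1 + (k:ℝ)) by ring,
          Real.rpow_add hx 1 (x + 1 + (k:ℝ)), Real.rpow_one]

noncomputable def useq (x : ℝ) (k : ℕ) : ℝ :=
  Real.exp x * cprod x k * x ^ (-x - 1 - (k:ℝ)) * Jint x k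

lemma useq_succ {x : ℝ} (hx : 0 < x) (k : ℕ) :
    useq x (k+1) = useq x k - cprod x (k+1) := by
  have hne : x + (k:ℝ) + 2 ≠ 0 := by positivity
  have hB : (0:ℝ) < x ^ (x + 2 + (k:ℝ)) := Real.rpow_pos_of_pos hx _
  have hinv : x ^ (-x - 1 - ((k:ℕ)+1:ℕ) : ℝ) = (x ^ (x + 2 + (k:ℝ)))⁻¹ := by
    rw [← Real.rpow_neg hx.le]
    congr 1
    push_cast; ring
  have hx1 : x ^ (-x - 1 - (k:ℝ)) = x * (x ^ (x + 2 + (k:ℝ)))⁻¹ := by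
    rw [← Real.rpow_neg hx.le,
      show -x - 1 - (k:ℝ) = 1 + -(x + 2 + (k:ℝ)) by ring, Real.rpow_add hx,
      Real.rpow_one]
  rw [useq, useq, Jint_rec x hx k, cprod_succ, hinv, hx1, Real.exp_neg]
  field_simp
  ring

lemma useq_partial {x : ℝ} (hx : 0 < x) (N : ℕ) :
    ∑ k ∈ Finset.range N, cprod x (k+1) = useq x 0 - useq x N := by
  induction N with
  | zero => simp
  | succ n ih => rw [Finset.sum_range_succ, ih, useq_succ hx n]; ring

lemma useq_nonneg {x : ℝ} (hx : 0 < x) (k : ℕ) : 0 ≤ useq x k := by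
  have := cprod_nonneg hx k
  have := Jint_nonneg hx k
  have : (0:ℝ) ≤ x ^ (-x - 1 - (k:ℝ)) := (Real.rpow_pos_of_pos hx _).le
  unfold useq
  have := Real.exp_pos x
  positivity

lemma useq_le {x : ℝ} (hx : 0 < x) (k : ℕ) :
    useq x k ≤ Real.exp x * x * cprod x k := by
  unfold useq
  have h1 : x ^ (-x - 1 - (k:ℝ)) * Jint x k ≤ x ^ (-x - 1 - (k:ℝ)) * x ^ (x + 2 + (k:ℝ)) :=
    mul_le_mul_of_nonneg_left (Jint_le hx k) (Real.rpow_pos_of_pos hx _).le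
  have h2 : x ^ (-x - 1 - (k:ℝ)) * x ^ (x + 2 + (k:ℝ)) = x := by
    rw [← Real.rpow_add hx]; ring_nf; exact Real.rpow_one x
  calc Real.exp x * cprod x k * x ^ (-x - 1 - (k:ℝ)) * Jint x k
      = Real.exp x * cprod x k * (x ^ (-x - 1 - (k:ℝ)) * Jint x k) := by ring
    _ ≤ Real.exp x * cprod x k * (x ^ (-x - 1 - (k:ℝ)) * x ^ (x + 2 + (k:ℝ))) := by
        apply mul_le_mul_of_nonneg_left h1
        have := cprod_nonneg hx k
        positivity
    _ = Real.exp x * x * cprod x k := by rw [h2]; ring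

lemma cprod_tendsto {x : ℝ} (hx : 0 < x) :
    Tendsto (fun n => cprod x n) atTop (nhds 0) := by
  have hr0 : (0:ℝ) ≤ x / (x + 2) := by positivity
  have hr1 : x / (x + 2) < 1 := by
    rw [div_lt_one (by linarith)]; linarith
  have hg : Tendsto (fun n : ℕ => (x / (x + 2)) ^ n) atTop (nhds 0) :=
    tendsto_pow_atTop_nhds_zero_of_lt_one hr0 hr1
  exact squeeze_zero (fun n => cprod_nonneg hx n) (fun n => cprod_le_geom hx n) hg

lemma useq_tendsto {x : ℝ} (hx : 0 < x) :
    Tendsto (fun n => useq x n) atTop (nhds 0) := by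
  have hg : Tendsto (fun n : ℕ => Real.exp x * x * cprod x n) atTop (nhds 0) := by
    have := (cprod_tendsto hx).const_mul (Real.exp x * x)
    simpa using this
  exact squeeze_zero (fun n => useq_nonneg hx n) (fun n => useq_le hx n) hg

lemma hasSum_cprod_shift {x : ℝ} (hx : 0 < x) :
    HasSum (fun k : ℕ => cprod x (k+1)) (useq x 0) := by
  rw [hasSum_iff_tendsto_nat_of_nonneg (fun k => cprod_nonneg hx (k+1))]
  have : (fun n : ℕ => ∑ k ∈ Finset.range n, cprod x (k+1))
      = fun n => useq x 0 - useq x n := funext fun n => useq_partial hx n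
  rw [this]
  simpa using (useq_tendsto hx).const_sub (useq x 0)

/-- For every `x > 0`, the series `∑_{i=1}^∞ i·∏_{j=1}^i x/(x+j+1)` converges and its
sum equals `x − e^x·x^(−x−1)·∫_0^x e^(−t)·t^(x+1) dt`. -/
theorem silicosis_H_one_zero_closed_form (x : ℝ) (hx : 0 < x) :
    HasSum (fun i : ℕ =>
        ((i + 1 : ℕ) : ℝ) * ∏ j ∈ Finset.Icc 1 (i + 1), x / (x + (j : ℝ) + 1))
      (x - Real.exp x * x ^ (-x - 1) *
        ∫ t in (0 : ℝ)..x, Real.exp (-t) * t ^ (x + 1)) := by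
  set T := useq x 0 with hT
  have h1 : HasSum (fun k : ℕ => cprod x (k+1)) T := hasSum_cprod_shift hx
  have hfull : HasSum (fun k : ℕ => cprod x k) (T + 1) := by
    have := (hasSum_nat_add_iff (f := fun k : ℕ => cprod x k) 1).mp h1
    simpa [cprod_zero] using this
  have h2 : HasSum (fun k : ℕ => x * cprod x k - (x+1) * cprod x (k+1))
      (x * (T + 1) - (x+1) * T) := (hfull.mul_left x).sub (h1.mul_left (x+1))
  have hfun : (fun i : ℕ =>
        ((i + 1 : ℕ) : ℝ) * ∏ j ∈ Finset.Icc 1 (i + 1), x / (x + (j : ℝ) + 1))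
      = fun k : ℕ => x * cprod x k - (x+1) * cprod x (k+1) := by
    funext i
    have hne : x + (i:ℝ) + 2 ≠ 0 := by positivity
    have hs : cprod x (i+1) * (x + (i:ℝ) + 2) = x * cprod x i := by
      rw [cprod_succ]; field_simp
    have : ((i + 1 : ℕ) : ℝ) * cprod x (i+1)
        = cprod x (i+1) * (x + (i:ℝ) + 2) - (x+1) * cprod x (i+1) := by
      push_cast; ring
    rw [show (∏ j ∈ Finset.Icc 1 (i + 1), x / (x + (j : ℝ) + 1)) = cprod x (i+1) from rfl,
      this, hs]
  rw [hfun]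
  have hTval : T = Real.exp x * x ^ (-x - 1) *
      ∫ t in (0 : ℝ)..x, Real.exp (-t) * t ^ (x + 1) := by
    rw [hT, useq, cprod_zero, Jint]
    norm_num
  have : x * (T + 1) - (x+1) * T = x - T := by ring
  rw [this] at h2
  rwa [hTval] at h2
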